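/- The number NCM_2(2n) of 2-distant noncrossing complete matchings of [2n] equals the n-th little Schröder number s_n (equivalently, the number of little Schröder paths of length 2n). -/

import Mathlib

open Finset

/-- Set partitions of `[n] = {1, …, n}`. -/
abbrev SP (n : ℕ) := Finpartition (Finset.Icc 1 n)

/-- `(i, j)` is an edge of the diagram of the partition `P`: either a loop `(i, i)`
on a singleton block, or `i < j` are in a common block with no element of that
block strictly between them. -/
def IsEdge {n : ℕ} (P : SP n) (i j : ℕ) : Prop :=
  (i = j ∧ {i} ∈ P.parts) ∨
  (i < j ∧ ∃ B ∈ P.parts, i ∈ B ∧ j ∈ B ∧ ∀ m ∈ B, ¬(i < m ∧ m < j))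

/-- Two edges `e₁ = (i₁, j₁)` and `e₂ = (i₂, j₂)` form a `k`-distant crossing:
`i₁ < i₂ ≤ j₁ < j₂` and `j₁ - i₂ ≥ k`. -/
def CrossPair (k : ℕ) (e₁ e₂ : ℕ × ℕ) : Prop :=
  e₁.1 < e₂.1 ∧ e₂.1 ≤ e₁.2 ∧ e₁.2 < e₂.2 ∧ k ≤ e₁.2 - e₂.1

/-- Two edges `e₁ = (i₁, j₁)` and `e₂ = (i₂, j₂)` form a `k`-distant nesting:
`i₁ < i₂ ≤ j₂ < j₁` and `j₂ - i₂ ≥ k`. -/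
def NestPair (k : ℕ) (e₁ e₂ : ℕ × ℕ) : Prop :=
  e₁.1 < e₂.1 ∧ e₂.1 ≤ e₂.2 ∧ e₂.2 < e₁.2 ∧ k ≤ e₂.2 - e₂.1

/-- The number of `k`-distant crossings of the partition `P`. -/
noncomputable def dcr {n : ℕ} (k : ℕ) (P : SP n) : ℕ :=
  Set.ncard {p : (ℕ × ℕ) × ℕ × ℕ |
    IsEdge P p.1.1 p.1.2 ∧ IsEdge P p.2.1 p.2.2 ∧ CrossPair k p.1 p.2}

/-- The number of `k`-distant nestings of the partition `P`. -/
noncomputable def dne {n : ℕ} (k : ℕ) (P : SP n) : ℕ :=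
  Set.ncard {p : (ℕ × ℕ) × ℕ × ℕ |
    IsEdge P p.1.1 p.1.2 ∧ IsEdge P p.2.1 p.2.2 ∧ NestPair k p.1 p.2}

/-- `P` is a complete matching: every block has exactly two elements. -/
def IsMatching {n : ℕ} (P : SP n) : Prop := ∀ B ∈ P.parts, B.card = 2

/-- The number of `k`-distant noncrossing complete matchings of `[m]`. -/
noncomputable def NCM (k m : ℕ) : ℕ :=
  Set.ncard {P : SP m | IsMatching P ∧ dcr k P = 0}

/-- The number of `k`-distant noncrossing partitions of `[n]`. -/
noncomputable def NCP (k n : ℕ) : ℕ :=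
  Set.ncard {P : SP n | dcr k P = 0}

/-- Openers of `P`: minimal elements of blocks of size at least two. -/
def openers {n : ℕ} (P : SP n) : Set ℕ :=
  {v | ∃ B ∈ P.parts, v ∈ B ∧ 2 ≤ B.card ∧ ∀ m ∈ B, v ≤ m}

/-- Closers of `P`: maximal elements of blocks of size at least two. -/
def closers {n : ℕ} (P : SP n) : Set ℕ :=
  {v | ∃ B ∈ P.parts, v ∈ B ∧ 2 ≤ B.card ∧ ∀ m ∈ B, m ≤ v}

/-- Singletons of `P`. -/
def singletons {n : ℕ} (P : SP n) : Set ℕ := {v | {v} ∈ P.parts}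

/-- Transients of `P`: elements of a block that are neither its minimum nor its
maximum (equivalently, vertices incident to two edges of the diagram). -/
def transients {n : ℕ} (P : SP n) : Set ℕ :=
  {v | ∃ B ∈ P.parts, v ∈ B ∧ (∃ m ∈ B, m < v) ∧ (∃ m ∈ B, v < m)}

open Finset

/-- Steps for Schröder paths: `U = (1,1)`, `D = (1,-1)`, `H = (2,0)`. -/
inductive SStep | U | D | H
deriving DecidableEq

/-- The total horizontal length of a Schröder path. -/
def xlen (l : List SStep) : ℕ :=
  (l.map (fun s => match s with | .H => 2 | _ => 1)).sum

/-- The final height of a Schröder path. -/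
def sht (l : List SStep) : ℤ :=
  (l.map (fun s => match s with | .U => 1 | .D => -1 | .H => 0)).sum

/-- A little Schröder path of length `2n`: from `(0,0)` to `(2n,0)` with steps
`(1,1)`, `(1,-1)`, `(2,0)`, never below the x-axis, no `(2,0)` step on the x-axis. -/
def IsLittleSchroederPath (n : ℕ) (l : List SStep) : Prop :=
  xlen l = 2 * n ∧ sht l = 0 ∧ (∀ p, p <+: l → 0 ≤ sht p) ∧
  ∀ p, p ++ [SStep.H] <+: l → 0 < sht p

/-- The `n`-th little Schröder number (A001003), as the number of little
Schröder paths of length `2n`. -/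
noncomputable def littleSchroeder (n : ℕ) : ℕ :=
  Set.ncard {l : List SStep | IsLittleSchroederPath n l}

/-- Steps for Motzkin paths. -/
inductive MStep | up | down | flat
deriving DecidableEq

instance : Fintype MStep :=
  ⟨{MStep.up, MStep.down, MStep.flat}, fun x => by cases x <;> simp⟩

/-- The height of a Motzkin path `f` of length `m` after `i` steps. -/
def mht {m : ℕ} (f : Fin m → MStep) (i : ℕ) : ℤ :=
  ∑ j : Fin m, if (j : ℕ) < i then
    (match f j with | .up => 1 | .down => -1 | .flat => 0) else 0

/-- `f` is a Motzkin path: it stays weakly above the x-axis and ends at height 0. -/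
def IsMotzkinPath {m : ℕ} (f : Fin m → MStep) : Prop :=
  (∀ i, 0 ≤ mht f i) ∧ mht f m = 0

/-- The `n`-th Motzkin number, as the number of Motzkin paths of length `n`. -/
noncomputable def motzkin (n : ℕ) : ℕ :=
  Set.ncard {f : Fin n → MStep | IsMotzkinPath f}

/-- The weight of the path `f`, where up steps have weight 1, a horizontal step
at height `h` has weight `b h`, and a down step starting at height `h` has
weight `lam h`. -/
def mweight {m : ℕ} (b lam : ℕ → ℕ) (f : Fin m → MStep) : ℕ :=
  ∏ j : Fin m, match f j with
    | .up => 1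
    | .flat => b (mht f (j : ℕ)).toNat
    | .down => lam (mht f (j : ℕ)).toNat

open Classical in
/-- The total weight of all weighted Motzkin paths of length `m`
(the `m`-th moment for the recurrence coefficients `b`, `lam`). -/
noncomputable def moment (b lam : ℕ → ℕ) (m : ℕ) : ℕ :=
  ∑ f ∈ Finset.univ.filter (fun f : Fin m → MStep => IsMotzkinPath f),
    mweight b lam f

open Classical in
/-- The total weight of all weighted Dyck paths (Motzkin paths with no
horizontal steps) of length `m`, where a down step starting at height `h` has
weight `lam h`. -/
noncomputable def dyckMoment (lam : ℕ → ℕ) (m : ℕ) : ℕ :=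
  ∑ f ∈ Finset.univ.filter
      (fun f : Fin m → MStep => IsMotzkinPath f ∧ ∀ j, f j ≠ MStep.flat),
    mweight (fun _ => 1) lam f


namespace NCMwork

@[simp] lemma xlen_nil : xlen [] = 0 := rfl
@[simp] lemma xlen_U (l : List SStep) : xlen (.U :: l) = xlen l + 1 := by
  simp [xlen]; ring
@[simp] lemma xlen_D (l : List SStep) : xlen (.D :: l) = xlen l + 1 := by
  simp [xlen]; ring
@[simp] lemma xlen_H (l : List SStep) : xlen (.H :: l) = xlen l + 2 := by
  simp [xlen]; ring

@[simp] lemma sht_nil : sht [] = 0 := rfl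
@[simp] lemma sht_U (l : List SStep) : sht (.U :: l) = 1 + sht l := by simp [sht]
@[simp] lemma sht_D (l : List SStep) : sht (.D :: l) = -1 + sht l := by simp [sht]
@[simp] lemma sht_H (l : List SStep) : sht (.H :: l) = sht l := by simp [sht]

lemma xlen_pos {l : List SStep} (h : l ≠ []) : 0 < xlen l := by
  cases l with
  | nil => simp at h
  | cons a l => cases a <;> simp <;> omega

/-- The stack-based decoding of a Schröder word into a list of edges. -/
def dec : List SStep → ℕ → List ℕ → List (ℕ × ℕ)
  | [], _, _ => []
  | .U :: l, p, s => dec l (p+1) (p :: s)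
  | .D :: l, p, s => (s.headI, p) :: dec l (p+1) s.tail
  | .H :: l, p, s => (s.headI, p+1) :: dec l (p+2) (p :: s.tail)

/-- Validity of a remaining word relative to current stack size `k`. -/
def Valid (l : List SStep) (k : ℕ) : Prop :=
  (∀ q, q <+: l → 0 ≤ (k : ℤ) + sht q) ∧
  (∀ q, q ++ [.H] <+: l → 0 < (k : ℤ) + sht q) ∧
  (k : ℤ) + sht l = 0

lemma valid_nil {k : ℕ} (h : Valid [] k) : k = 0 := by
  have := h.2.2; simp at this; omega

lemma valid_U {l : List SStep} {k : ℕ} (h : Valid (.U :: l) k) : Valid l (k+1) := by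
  obtain ⟨h1, h2, h3⟩ := h
  refine ⟨fun q hq => ?_, fun q hq => ?_, ?_⟩
  · have := h1 (.U :: q) (by simpa using hq)
    simp at this ⊢; push_cast; omega
  · have := h2 (.U :: q) (by simpa [List.cons_prefix_cons] using hq)
    simp at this ⊢; push_cast; omega
  · simp at h3 ⊢; push_cast; omega

lemma valid_D {l : List SStep} {k : ℕ} (h : Valid (.D :: l) k) :
    1 ≤ k ∧ Valid l (k-1) := by
  obtain ⟨h1, h2, h3⟩ := h
  have hk : 1 ≤ k := by
    have := h1 [.D] ⟨l, rfl⟩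
    simp at this; omega
  refine ⟨hk, fun q hq => ?_, fun q hq => ?_, ?_⟩
  · have := h1 (.D :: q) (by simpa using hq)
    simp at this ⊢
    have : ((k : ℤ) - 1) = ((k - 1 : ℕ) : ℤ) := by push_cast [hk]; omega
    omega
  · have := h2 (.D :: q) (by simpa [List.cons_prefix_cons] using hq)
    simp at this ⊢
    have : ((k : ℤ) - 1) = ((k - 1 : ℕ) : ℤ) := by push_cast [hk]; omega
    omega
  · have := h3
    simp at this ⊢
    have : ((k : ℤ) - 1) = ((k - 1 : ℕ) : ℤ) := by push_cast [hk]; omega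
    omega

lemma valid_H {l : List SStep} {k : ℕ} (h : Valid (.H :: l) k) :
    1 ≤ k ∧ Valid l k := by
  obtain ⟨h1, h2, h3⟩ := h
  have hk : 1 ≤ k := by
    have := h2 [] ⟨l, by simp⟩
    simp at this; omega
  refine ⟨hk, fun q hq => ?_, fun q hq => ?_, ?_⟩
  · have := h1 (.H :: q) (by simpa using hq)
    simpa using this
  · have := h2 (.H :: q) (by simpa [List.cons_prefix_cons] using hq)
    simpa using this
  · simpa using h3

/-- Invariants of the stack. -/
structure Stk (p : ℕ) (s : List ℕ) : Prop where
  sorted : s.Pairwise (· > ·)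
  mem : ∀ x ∈ s, 1 ≤ x ∧ x < p
  pos : 1 ≤ p

lemma Stk.push {p : ℕ} {s : List ℕ} (h : Stk p s) : Stk (p+1) (p :: s) := by
  refine ⟨?_, ?_, by omega⟩
  · rw [List.pairwise_cons]
    exact ⟨fun x hx => (h.mem x hx).2, h.sorted⟩
  · intro x hx
    rcases List.mem_cons.1 hx with rfl | hx
    · exact ⟨h.pos, by omega⟩
    · have := h.mem x hx; omega

lemma Stk.tail {p : ℕ} {a : ℕ} {s : List ℕ} (h : Stk p (a :: s)) : Stk (p+1) s := by
  refine ⟨(List.pairwise_cons.1 h.sorted).2, fun x hx => ?_, by omega⟩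
  have := h.mem x (List.mem_cons_of_mem _ hx); omega

lemma Stk.pushtail {p : ℕ} {a : ℕ} {s : List ℕ} (h : Stk p (a :: s)) :
    Stk (p+2) (p :: s) := by
  refine ⟨?_, ?_, by omega⟩
  · rw [List.pairwise_cons]
    exact ⟨fun x hx => (h.mem x (List.mem_cons_of_mem _ hx)).2,
      (List.pairwise_cons.1 h.sorted).2⟩
  · intro x hx
    rcases List.mem_cons.1 hx with rfl | hx
    · have := h.pos; omega
    · have := h.mem x (List.mem_cons_of_mem _ hx); omega

end NCMwork

namespace NCMwork

local infixl:50 " ~ " => List.Perm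

/-- Endpoints of an edge list. -/
def epts (E : List (ℕ × ℕ)) : List ℕ := E.flatMap (fun e => [e.1, e.2])

@[simp] lemma epts_nil : epts [] = [] := rfl
@[simp] lemma epts_cons (e : ℕ × ℕ) (E : List (ℕ × ℕ)) :
    epts (e :: E) = e.1 :: e.2 :: epts E := rfl

/-- The main specification of `dec`. -/
theorem dec_spec : ∀ (l : List SStep) (p : ℕ) (s : List ℕ), Stk p s →
    Valid l s.length →
    (∀ e ∈ dec l p s, e.1 < e.2 ∧ p ≤ e.2 ∧ (e.1 ∈ s ∨ p ≤ e.1)) ∧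
    (epts (dec l p s)).Perm (s ++ List.range' p (xlen l)) ∧
    (∀ e₁ ∈ dec l p s, ∀ e₂ ∈ dec l p s, ¬ CrossPair 2 e₁ e₂) := by
  intro l
  induction l with
  | nil =>
    intro p s hs hv
    have : s = [] := List.length_eq_zero_iff.1 (valid_nil hv)
    subst this
    simp [dec]
  | cons a l ih =>
    intro p s hs hv
    cases a with
    | U =>
      have hv' := valid_U hv
      have hs' := hs.push
      have H := ih (p+1) (p :: s) hs' (by simpa using hv')
      obtain ⟨H1, H2, H3⟩ := H
      rw [show dec (.U :: l) p s = dec l (p+1) (p :: s) from rfl]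
      refine ⟨fun e he => ?_, ?_, H3⟩
      · obtain ⟨e1, e2, e3⟩ := H1 e he
        refine ⟨e1, by omega, ?_⟩
        rcases e3 with h3 | h3
        · rcases List.mem_cons.1 h3 with rfl | h3
          · right; omega
          · left; exact h3
        · right; omega
      · rw [xlen_U, List.range'_succ]
        calc epts (dec l (p+1) (p :: s))
            ~ (p :: s) ++ List.range' (p+1) (xlen l) := H2
          _ = p :: (s ++ List.range' (p+1) (xlen l)) := rfl
          _ ~ s ++ p :: List.range' (p+1) (xlen l) := List.perm_middle.symm
    | D =>
      obtain ⟨hk, hv'⟩ := valid_D hv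
      obtain ⟨x, s', rfl⟩ : ∃ x s', s = x :: s' := by
        cases s with
        | nil => simp at hk
        | cons x s' => exact ⟨x, s', rfl⟩
      have hs' := hs.tail
      have H := ih (p+1) s' hs' (by simpa using hv')
      obtain ⟨H1, H2, H3⟩ := H
      have hdec : dec (.D :: l) p (x :: s') = (x, p) :: dec l (p+1) s' := rfl
      rw [hdec]
      have hx := hs.mem x (List.mem_cons_self)
      have hsorted := List.pairwise_cons.1 hs.sorted
      refine ⟨?_, ?_, ?_⟩
      · intro e he
        rcases List.mem_cons.1 he with rfl | he
        · exact ⟨hx.2, le_rfl, Or.inl (List.mem_cons_self)⟩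
        · obtain ⟨e1, e2, e3⟩ := H1 e he
          refine ⟨e1, by omega, ?_⟩
          rcases e3 with h3 | h3
          · left; exact List.mem_cons_of_mem _ h3
          · right; omega
      · rw [xlen_D, List.range'_succ]
        calc epts ((x, p) :: dec l (p+1) s')
            = x :: p :: epts (dec l (p+1) s') := rfl
          _ ~ x :: p :: (s' ++ List.range' (p+1) (xlen l)) := (H2.cons _).cons _
          _ ~ x :: (s' ++ p :: List.range' (p+1) (xlen l)) :=
              (List.perm_middle.symm).cons _
          _ = (x :: s') ++ p :: List.range' (p+1) (xlen l) := rfl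
      · intro e₁ he₁ e₂ he₂ hc
        obtain ⟨c1, c2, c3, c4⟩ := hc
        rcases List.mem_cons.1 he₁ with rfl | he₁ <;>
          rcases List.mem_cons.1 he₂ with rfl | he₂
        · simp at c1
        · -- e₁ = (x, p), e₂ old
          obtain ⟨f1, f2, f3⟩ := H1 e₂ he₂
          simp only at c1 c2 c3 c4
          rcases f3 with h3 | h3
          · have := hsorted.1 e₂.1 h3; omega
          · omega
        · -- e₁ old, e₂ = (x, p)
          obtain ⟨f1, f2, f3⟩ := H1 e₁ he₁
          simp only at c1 c2 c3 c4
          omega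
        · exact H3 e₁ he₁ e₂ he₂ ⟨c1, c2, c3, c4⟩
    | H =>
      obtain ⟨hk, hv'⟩ := valid_H hv
      obtain ⟨x, s', rfl⟩ : ∃ x s', s = x :: s' := by
        cases s with
        | nil => simp at hk
        | cons x s' => exact ⟨x, s', rfl⟩
      have hs' := hs.pushtail
      have H := ih (p+2) (p :: s') hs' (by simpa using hv')
      obtain ⟨H1, H2, H3⟩ := H
      have hdec : dec (.H :: l) p (x :: s') = (x, p+1) :: dec l (p+2) (p :: s') := rfl
      rw [hdec]
      have hx := hs.mem x (List.mem_cons_self)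
      have hsorted := List.pairwise_cons.1 hs.sorted
      refine ⟨?_, ?_, ?_⟩
      · intro e he
        rcases List.mem_cons.1 he with rfl | he
        · exact ⟨by omega, by omega, Or.inl (List.mem_cons_self)⟩
        · obtain ⟨e1, e2, e3⟩ := H1 e he
          refine ⟨e1, by omega, ?_⟩
          rcases e3 with h3 | h3
          · rcases List.mem_cons.1 h3 with rfl | h3
            · right; omega
            · left; exact List.mem_cons_of_mem _ h3
          · right; omega
      · rw [xlen_H]
        have hr : List.range' p (xlen l + 2) = p :: (p+1) :: List.range' (p+2) (xlen l) := by
          rw [show xlen l + 2 = (xlen l + 1) + 1 from rfl, List.range'_succ, List.range'_succ]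
        rw [hr]
        calc epts ((x, p+1) :: dec l (p+2) (p :: s'))
            = x :: (p+1) :: epts (dec l (p+2) (p :: s')) := rfl
          _ ~ x :: (p+1) :: ((p :: s') ++ List.range' (p+2) (xlen l)) := (H2.cons _).cons _
          _ = x :: (p+1) :: p :: (s' ++ List.range' (p+2) (xlen l)) := rfl
          _ ~ x :: p :: (p+1) :: (s' ++ List.range' (p+2) (xlen l)) :=
              ((List.Perm.swap _ _ _)).cons _
          _ ~ x :: p :: (s' ++ (p+1) :: List.range' (p+2) (xlen l)) :=
              ((List.perm_middle.symm).cons _).cons _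
          _ ~ x :: (s' ++ p :: (p+1) :: List.range' (p+2) (xlen l)) :=
              (List.perm_middle.symm).cons _
          _ = (x :: s') ++ p :: (p+1) :: List.range' (p+2) (xlen l) := rfl
      · intro e₁ he₁ e₂ he₂ hc
        obtain ⟨c1, c2, c3, c4⟩ := hc
        rcases List.mem_cons.1 he₁ with rfl | he₁ <;>
          rcases List.mem_cons.1 he₂ with rfl | he₂
        · simp at c1
        · -- e₁ = (x, p+1), e₂ new-old
          obtain ⟨f1, f2, f3⟩ := H1 e₂ he₂
          simp only at c1 c2 c3 c4
          rcases f3 with h3 | h3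
          · rcases List.mem_cons.1 h3 with h3 | h3
            · omega
            · have := hsorted.1 e₂.1 h3; omega
          · omega
        · -- e₁ old, e₂ = (x, p+1)
          obtain ⟨f1, f2, f3⟩ := H1 e₁ he₁
          simp only at c1 c2 c3 c4
          omega
        · exact H3 e₁ he₁ e₂ he₂ ⟨c1, c2, c3, c4⟩

end NCMwork

namespace NCMwork

lemma Stk.mono {p q : ℕ} {s : List ℕ} (h : Stk p s) (hpq : p ≤ q) : Stk q s :=
  ⟨h.sorted, fun x hx => ⟨(h.mem x hx).1, lt_of_lt_of_le (h.mem x hx).2 hpq⟩,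
    le_trans h.pos hpq⟩

/-- Every element of the stack is eventually closed: it appears as the opener
of some decoded edge. -/
lemma exists_closer (l : List SStep) (p : ℕ) (s : List ℕ) (hs : Stk p s)
    (hv : Valid l s.length) {x : ℕ} (hx : x ∈ s) :
    ∃ e ∈ dec l p s, e.1 = x ∧ x < e.2 := by
  obtain ⟨H1, H2, _⟩ := dec_spec l p s hs hv
  have hmem : x ∈ epts (dec l p s) := H2.mem_iff.2 (by
    exact List.mem_append.2 (Or.inl hx))
  obtain ⟨e, he, hxe⟩ := List.mem_flatMap.1 hmem
  obtain ⟨e1, e2, _⟩ := H1 e he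
  have hxp := (hs.mem x hx).2
  rcases List.mem_cons.1 hxe with h | hxe2
  · exact ⟨e, he, h.symm, by omega⟩
  · have h := List.mem_singleton.1 hxe2
    omega

/-- The encoder: reads off the Schröder word of a matching with partner
function `π`, given the fuel (remaining horizontal length) and position. -/
def enc (π : ℕ → ℕ) : ℕ → ℕ → List SStep
  | 0, _ => []
  | 1, p => [if π p ≤ p then .D else .U]
  | (f+2), p =>
    if π p ≤ p then .D :: enc π (f+1) (p+1)
    else if π (p+1) < p then .H :: enc π f (p+2)
    else .U :: enc π (f+1) (p+1)

theorem enc_dec (π : ℕ → ℕ) : ∀ (l : List SStep) (p : ℕ) (s : List ℕ),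
    Stk p s → Valid l s.length →
    (∀ e ∈ dec l p s, π e.1 = e.2 ∧ π e.2 = e.1) →
    enc π (xlen l) p = l := by
  intro l
  induction l with
  | nil => intro p s _ _ _; rfl
  | cons a l ih =>
    intro p s hs hv hπ
    cases a with
    | U =>
      have hv' := valid_U hv
      have hv'' : Valid l (p :: s).length := by simpa using hv'
      have hs' := hs.push
      have hE : dec (.U :: l) p s = dec l (p+1) (p :: s) := rfl
      rw [hE] at hπ
      -- π p > p
      obtain ⟨e, he, he1, he2⟩ := exists_closer l (p+1) (p :: s) hs' hv''
        (List.mem_cons_self)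
      have hπp : p < π p := by
        have := (hπ e he).1; rw [he1] at this; omega
      -- l ≠ []
      have hl : l ≠ [] := by
        rintro rfl
        have := valid_nil hv''
        simp at this
      obtain ⟨g, hg⟩ : ∃ g, xlen l = g + 1 := by
        have := xlen_pos hl; exact ⟨xlen l - 1, by omega⟩
      -- ¬ π (p+1) < p
      have hπp1 : ¬ π (p+1) < p := by
        cases l with
        | nil => simp at hl
        | cons c l' =>
          cases c with
          | U =>
            have hs'' := hs'.push
            have hvv : Valid l' ((p+1) :: p :: s).length := by
              simpa using valid_U hv''
            obtain ⟨e', he', h1, h2⟩ := exists_closer l' (p+2) ((p+1) :: p :: s)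
              hs'' hvv (List.mem_cons_self)
            have := (hπ e' he').1
            rw [h1] at this; omega
          | D =>
            have : (p, p+1) ∈ dec (.D :: l') (p+1) (p :: s) :=
              List.mem_cons_self
            have := (hπ _ this).2
            simp at this; omega
          | H =>
            have hsH : Stk (p+3) ((p+1) :: s) :=
              ((hs.mono (by omega)).push).mono (by omega)
            have hvv : Valid l' ((p+1) :: s).length := by
              simpa using (valid_H hv'').2
            obtain ⟨e', he', h1, h2⟩ := exists_closer l' (p+3) ((p+1) :: s)
              hsH hvv (List.mem_cons_self)
            have he'' : e' ∈ dec (.H :: l') (p+1) (p :: s) := by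
              rw [show dec (.H :: l') (p+1) (p :: s)
                  = ((p :: s).headI, p+2) :: dec l' (p+3) ((p+1) :: (p :: s).tail)
                  from rfl]
              exact List.mem_cons_of_mem _ he'
            have := (hπ e' he'').1
            rw [h1] at this; omega
      rw [xlen_U, hg]
      show enc π (g + 2) p = _
      rw [enc, if_neg (by omega), if_neg hπp1]
      rw [← hg, ih (p+1) (p :: s) hs' hv'' hπ]
    | D =>
      obtain ⟨hk, hv'⟩ := valid_D hv
      obtain ⟨x, s', rfl⟩ : ∃ x s', s = x :: s' := by
        cases s with
        | nil => simp at hk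
        | cons x s' => exact ⟨x, s', rfl⟩
      have hv'' : Valid l s'.length := by simpa using hv'
      have hE : dec (.D :: l) p (x :: s') = (x, p) :: dec l (p+1) s' := rfl
      rw [hE] at hπ
      have hπp : π p = x := (hπ (x, p) (List.mem_cons_self)).2
      have hxp := (hs.mem x (List.mem_cons_self)).2
      have hπ' : ∀ e ∈ dec l (p+1) s', π e.1 = e.2 ∧ π e.2 = e.1 :=
        fun e he => hπ e (List.mem_cons_of_mem _ he)
      cases hl : l with
      | nil =>
        subst hl
        show enc π 1 p = _
        rw [enc, if_pos (by omega)]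
      | cons c l' =>
        rw [← hl]
        have hlne : l ≠ [] := by rw [hl]; simp
        obtain ⟨g, hg⟩ : ∃ g, xlen l = g + 1 := by
          have := xlen_pos hlne; exact ⟨xlen l - 1, by omega⟩
        rw [xlen_D, hg]
        show enc π (g + 2) p = _
        rw [enc, if_pos (by omega)]
        rw [← hg, ih (p+1) s' hs.tail hv'' hπ']
    | H =>
      obtain ⟨hk, hv'⟩ := valid_H hv
      obtain ⟨x, s', rfl⟩ : ∃ x s', s = x :: s' := by
        cases s with
        | nil => simp at hk
        | cons x s' => exact ⟨x, s', rfl⟩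
      have hv'' : Valid l (p :: s').length := by simpa using hv'
      have hE : dec (.H :: l) p (x :: s') = (x, p+1) :: dec l (p+2) (p :: s') := rfl
      rw [hE] at hπ
      have hπp1 : π (p+1) = x := (hπ (x, p+1) (List.mem_cons_self)).2
      have hxp := (hs.mem x (List.mem_cons_self)).2
      have hπ' : ∀ e ∈ dec l (p+2) (p :: s'), π e.1 = e.2 ∧ π e.2 = e.1 :=
        fun e he => hπ e (List.mem_cons_of_mem _ he)
      obtain ⟨e, he, he1, he2⟩ := exists_closer l (p+2) (p :: s') hs.pushtail hv''
        (List.mem_cons_self)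
      have hπp : p < π p := by
        have := (hπ' e he).1; rw [he1] at this; omega
      rw [xlen_H]
      show enc π (xlen l + 2) p = _
      rw [enc, if_neg (by omega), if_pos (by omega)]
      rw [ih (p+2) (p :: s') hs.pushtail hv'' hπ']

end NCMwork

namespace NCMwork

/-- Invariants for the encoding process. -/
structure DecInv (π : ℕ → ℕ) (m p f : ℕ) (s : List ℕ) : Prop where
  stk : Stk p s
  ssub : ∀ x ∈ s, x ∈ Finset.Icc 1 m
  isub : ∀ q ∈ Finset.Ico p (p+f), q ∈ Finset.Icc 1 m
  sclose : ∀ x ∈ s, π x ∈ Finset.Ico p (p+f)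
  iclose : ∀ q ∈ Finset.Ico p (p+f), π q ∈ s ∨ π q ∈ Finset.Ico p (p+f)
  J : ∀ x ∈ s, x + 1 = p → ¬ π p < x

section DecEnc

variable {π : ℕ → ℕ} {m : ℕ}
  (Hinv : ∀ x ∈ Finset.Icc 1 m, π x ∈ Finset.Icc 1 m ∧ π (π x) = x ∧ π x ≠ x)
  (Hc : ∀ x y, x ∈ Finset.Icc 1 m → y ∈ Finset.Icc 1 m → x < y → y ≤ π x →
    π x < π y → y + 2 ≤ π x → False)

include Hinv Hc in
/-- If the current position `c` closes a stack element, it closes the top. -/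
lemma top_of {p f : ℕ} {s : List ℕ} {c : ℕ} (inv : DecInv π m p f s)
    (hc : c ∈ Finset.Ico p (p+f)) (hcs : π c ∈ s)
    (hgap : ∀ y ∈ s, π c < y → y + 2 ≤ c)
    (hover : ∀ y ∈ s, y ≠ π c → c < π y) : s.headI = π c := by
  obtain ⟨a, s', rfl⟩ : ∃ a s', s = a :: s' := by
    cases s with
    | nil => simp at hcs
    | cons a s' => exact ⟨a, s', rfl⟩
  by_contra hne
  have ha : a ≠ π c := by simpa using hne
  have hmem : π c ∈ s' := by
    rcases List.mem_cons.1 hcs with h | h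
    · exact absurd h.symm ha
    · exact h
  have hlt : π c < a := (List.pairwise_cons.1 inv.stk.sorted).1 _ hmem
  have hπc : π (π c) = c := (Hinv c (inv.isub c hc)).2.1
  have hap : a < p := (inv.stk.mem a (List.mem_cons_self)).2
  have hcp : p ≤ c := (Finset.mem_Ico.1 hc).1
  exact Hc (π c) a (inv.ssub _ hcs) (inv.ssub a (List.mem_cons_self)) hlt
    (by omega) (by rw [hπc]; exact hover a (List.mem_cons_self) ha)
    (by rw [hπc]; exact hgap a (List.mem_cons_self) hlt)

include Hinv Hc in
theorem dec_enc : ∀ (f : ℕ) (p : ℕ) (s : List ℕ), DecInv π m p f s →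
    xlen (enc π f p) = f ∧
    sht (enc π f p) = -(s.length : ℤ) ∧
    (∀ q, q <+: enc π f p → -(s.length : ℤ) ≤ sht q) ∧
    (∀ q, q ++ [.H] <+: enc π f p → -(s.length : ℤ) < sht q) ∧
    (∀ e ∈ dec (enc π f p) p s, e.2 = π e.1 ∧ e.1 = π e.2) := by
  intro f
  induction f using Nat.strong_induction_on with
  | _ f IH =>
  match f with
  | 0 =>
    intro p s inv
    have hs : s = [] := by
      cases s with
      | nil => rfl
      | cons a s' =>
        have := inv.sclose a (List.mem_cons_self)
        simp at this
    subst hs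
    refine ⟨rfl, rfl, ?_, ?_, ?_⟩
    · intro q hq
      rw [List.prefix_nil.1 hq]; simp
    · intro q hq
      have := List.prefix_nil.1 hq
      simp at this
    · intro e he
      simp [enc, dec] at he
  | 1 =>
    intro p s inv
    have hp : p ∈ Finset.Ico p (p+1) := by simp
    have hpIcc := inv.isub p hp
    have hπne : π p ≠ p := (Hinv p hpIcc).2.2
    have hπs : π p ∈ s := by
      rcases inv.iclose p hp with h | h
      · exact h
      · exfalso; simp at h; omega
    have hπp : π p < p := (inv.stk.mem _ hπs).2
    have hππ : π (π p) = p := (Hinv p hpIcc).2.1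
    obtain ⟨a, s', rfl⟩ : ∃ a s', s = a :: s' := by
      cases s with
      | nil => simp at hπs
      | cons a s' => exact ⟨a, s', rfl⟩
    have hs' : s' = [] := by
      cases s' with
      | nil => rfl
      | cons b t =>
        exfalso
        have hb : b ∈ a :: b :: t := List.mem_cons_of_mem _ (List.mem_cons_self)
        have h1 := inv.sclose b hb
        rw [Finset.mem_Ico] at h1
        have h2 := inv.sclose a (List.mem_cons_self)
        rw [Finset.mem_Ico] at h2
        have hab : a > b := (List.pairwise_cons.1 inv.stk.sorted).1 _ (List.mem_cons_self)
        have e1 : π b = p := by omega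
        have e2 : π a = p := by omega
        have hbp : π (π b) = b := (Hinv b (inv.ssub b hb)).2.1
        have hap : π (π a) = a := (Hinv a (inv.ssub a (List.mem_cons_self))).2.1
        rw [e1] at hbp
        rw [e2] at hap
        omega
    subst hs'
    have ha : a = π p := by
      have h2 := inv.sclose a (List.mem_cons_self)
      rw [Finset.mem_Ico] at h2
      have e2 : π a = p := by omega
      have hap : π (π a) = a := (Hinv a (inv.ssub a (List.mem_cons_self))).2.1
      rw [e2] at hap
      omega
    subst ha
    have henc : enc π 1 p = [.D] := by
      rw [enc, if_pos (by omega)]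
    rw [henc]
    refine ⟨rfl, by simp, ?_, ?_, ?_⟩
    · intro q hq
      cases q with
      | nil => simp
      | cons b q' =>
        rw [List.cons_prefix_cons] at hq
        obtain ⟨rfl, hq⟩ := hq
        rw [List.prefix_nil.1 hq]
        simp
    · intro q hq
      cases q with
      | nil =>
        simp [List.cons_prefix_cons] at hq
      | cons b q' =>
        rw [show (b :: q') ++ [SStep.H] = b :: (q' ++ [SStep.H]) from rfl,
          List.cons_prefix_cons] at hq
        have := List.prefix_nil.1 hq.2
        simp at this
    · intro e he
      have : dec [SStep.D] p [π p] = [(π p, p)] := rfl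
      rw [this] at he
      rcases List.mem_singleton.1 he with rfl
      exact ⟨hππ.symm, rfl⟩
  | (f+2) =>
    intro p s inv
    have hp : p ∈ Finset.Ico p (p+(f+2)) := by simp
    have hpIcc := inv.isub p hp
    have hπne : π p ≠ p := (Hinv p hpIcc).2.2
    have hππ : π (π p) = p := (Hinv p hpIcc).2.1
    by_cases hD : π p ≤ p
    · -- D step
      have hπs : π p ∈ s := by
        rcases inv.iclose p hp with h | h
        · exact h
        · exfalso; simp at h; omega
      have htop : s.headI = π p := by
        refine top_of Hinv Hc inv hp hπs ?_ ?_
        · intro y hy hlt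
          by_cases hyp : y + 1 = p
          · exact absurd hlt (inv.J y hy hyp)
          · have := (inv.stk.mem y hy).2; omega
        · intro y hy hne
          have h1 := inv.sclose y hy
          simp only [Finset.mem_Ico] at h1
          have : π y ≠ p := by
            intro h
            have : π (π y) = y := (Hinv y (inv.ssub y hy)).2.1
            rw [h] at this
            omega
          omega
      obtain ⟨a, s', rfl⟩ : ∃ a s', s = a :: s' := by
        cases s with
        | nil => simp at hπs
        | cons a s' => exact ⟨a, s', rfl⟩
      simp only [List.headI] at htop
      have hanotins' : a ∉ s' := fun h =>
        absurd ((List.pairwise_cons.1 inv.stk.sorted).1 _ h) (lt_irrefl a).elim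
      have inv' : DecInv π m (p+1) (f+1) s' := by
        refine ⟨inv.stk.tail, fun x hx => inv.ssub x (List.mem_cons_of_mem _ hx),
          fun q hq => inv.isub q (by simp at hq ⊢; omega), ?_, ?_, ?_⟩
        · intro x hx
          have h1 := inv.sclose x (List.mem_cons_of_mem _ hx)
          simp only [Finset.mem_Ico] at h1 ⊢
          have : π x ≠ p := by
            intro h
            have hxx : π (π x) = x := (Hinv x (inv.ssub x (List.mem_cons_of_mem _ hx))).2.1
            rw [h] at hxx
            rw [← htop] at hxx
            exact hanotins' (hxx ▸ hx)
          omega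
        · intro q hq
          simp only [Finset.mem_Ico] at hq
          have hq' : q ∈ Finset.Ico p (p+(f+2)) := by simp; omega
          rcases inv.iclose q hq' with h | h
          · rcases List.mem_cons.1 h with h2 | h2
            · exfalso
              have : π (π q) = q := (Hinv q (inv.isub q hq')).2.1
              rw [h2, htop, hππ] at this
              omega
            · exact Or.inl h2
          · right
            simp only [Finset.mem_Ico] at h ⊢
            have : π q ≠ p := by
              intro h3
              have : π (π q) = q := (Hinv q (inv.isub q hq')).2.1
              rw [h3] at this
              omega
            omega
        · intro x hx hxp
          have := (inv.stk.mem x (List.mem_cons_of_mem _ hx)).2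
          omega
      obtain ⟨C1, C2, C3, C4, C5⟩ := IH (f+1) (by omega) (p+1) s' inv'
      have henc : enc π (f+2) p = .D :: enc π (f+1) (p+1) := by
        rw [enc, if_pos hD]
      rw [henc]
      have hdec : dec (.D :: enc π (f+1) (p+1)) p (a :: s')
          = (a, p) :: dec (enc π (f+1) (p+1)) (p+1) s' := rfl
      refine ⟨by simp [C1], by rw [sht_D, C2]; push_cast [List.length_cons]; ring, ?_, ?_, ?_⟩
      · intro q hq
        cases q with
        | nil => simp
        | cons b q' =>
          rw [List.cons_prefix_cons] at hq
          obtain ⟨rfl, hq⟩ := hq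
          have := C3 q' hq
          simp
          push_cast
          omega
      · intro q hq
        cases q with
        | nil =>
          simp [List.cons_prefix_cons] at hq
        | cons b q' =>
          rw [show (b :: q') ++ [SStep.H] = b :: (q' ++ [SStep.H]) from rfl,
            List.cons_prefix_cons] at hq
          obtain ⟨rfl, hq⟩ := hq
          have := C4 q' hq
          simp
          push_cast
          omega
      · intro e he
        rw [hdec] at he
        rcases List.mem_cons.1 he with rfl | he
        · exact ⟨show p = π a by rw [htop, hππ], htop⟩
        · exact C5 e he
    · -- π p > p
      have hπp : p < π p := by omega
      have hπpIco : π p ∈ Finset.Ico p (p+(f+2)) := by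
        rcases inv.iclose p hp with h | h
        · exfalso
          have := (inv.stk.mem _ h).2
          omega
        · exact h
      by_cases hH : π (p+1) < p
      · -- H step
        have hp1 : p + 1 ∈ Finset.Ico p (p+(f+2)) := by simp
        have hp1Icc := inv.isub _ hp1
        have hππ1 : π (π (p+1)) = p + 1 := (Hinv _ hp1Icc).2.1
        have hπ1s : π (p+1) ∈ s := by
          rcases inv.iclose _ hp1 with h | h
          · exact h
          · exfalso; simp only [Finset.mem_Ico] at h; omega
        have htop : s.headI = π (p+1) := by
          refine top_of Hinv Hc inv hp1 hπ1s ?_ ?_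
          · intro y hy _
            have := (inv.stk.mem y hy).2; omega
          · intro y hy hne
            have h1 := inv.sclose y hy
            simp only [Finset.mem_Ico] at h1
            have hyIcc := inv.ssub y hy
            have hy2 : π (π y) = y := (Hinv y hyIcc).2.1
            have hne1 : π y ≠ p := by
              intro h
              rw [h] at hy2
              have := (inv.stk.mem y hy).2
              omega
            have hne2 : π y ≠ p + 1 := by
              intro h
              rw [h] at hy2
              exact hne (by rw [← hy2])
            omega
        obtain ⟨a, s', rfl⟩ : ∃ a s', s = a :: s' := by
          cases s with
          | nil => simp at hπ1s
          | cons a s' => exact ⟨a, s', rfl⟩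
        simp only [List.headI] at htop
        have hanotins' : a ∉ s' := fun h =>
          absurd ((List.pairwise_cons.1 inv.stk.sorted).1 _ h) (lt_irrefl a).elim
        have hπp2 : π p ≠ p + 1 := by
          intro h
          rw [h] at hππ
          omega
        have inv' : DecInv π m (p+2) f (p :: s') := by
          refine ⟨inv.stk.pushtail, ?_, fun q hq => inv.isub q (by simp at hq ⊢; omega),
            ?_, ?_, ?_⟩
          · intro x hx
            rcases List.mem_cons.1 hx with rfl | hx
            · exact hpIcc
            · exact inv.ssub x (List.mem_cons_of_mem _ hx)
          · intro x hx
            rcases List.mem_cons.1 hx with rfl | hx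
            · simp only [Finset.mem_Ico] at hπpIco ⊢
              omega
            · have h1 := inv.sclose x (List.mem_cons_of_mem _ hx)
              simp only [Finset.mem_Ico] at h1 ⊢
              have hxIcc := inv.ssub x (List.mem_cons_of_mem _ hx)
              have hx2 : π (π x) = x := (Hinv x hxIcc).2.1
              have hne1 : π x ≠ p := by
                intro h; rw [h] at hx2
                have := (inv.stk.mem x (List.mem_cons_of_mem _ hx)).2
                omega
              have hne2 : π x ≠ p + 1 := by
                intro h; rw [h] at hx2
                rw [← htop] at hx2
                exact hanotins' (hx2 ▸ hx)
              omega
          · intro q hq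
            simp only [Finset.mem_Ico] at hq
            have hq' : q ∈ Finset.Ico p (p+(f+2)) := by simp; omega
            have hq2 : π (π q) = q := (Hinv q (inv.isub q hq')).2.1
            rcases inv.iclose q hq' with h | h
            · rcases List.mem_cons.1 h with h2 | h2
              · exfalso
                rw [h2, htop, hππ1] at hq2
                omega
              · exact Or.inl (List.mem_cons_of_mem _ h2)
            · simp only [Finset.mem_Ico] at h
              by_cases h3 : π q = p
              · exact Or.inl (h3 ▸ List.mem_cons_self)
              · have : π q ≠ p + 1 := by
                  intro h4; rw [h4] at hq2; omega
                right; simp only [Finset.mem_Ico]; omega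
          · intro x hx hxp
            rcases List.mem_cons.1 hx with rfl | hx
            · omega
            · have := (inv.stk.mem x (List.mem_cons_of_mem _ hx)).2
              omega
        obtain ⟨C1, C2, C3, C4, C5⟩ := IH f (by omega) (p+2) (p :: s') inv'
        have henc : enc π (f+2) p = .H :: enc π f (p+2) := by
          rw [enc, if_neg hD, if_pos hH]
        rw [henc]
        have hdec : dec (.H :: enc π f (p+2)) p (a :: s')
            = (a, p+1) :: dec (enc π f (p+2)) (p+2) (p :: s') := rfl
        have hlen : ((p :: s').length : ℤ) = (a :: s').length := by simp
        refine ⟨by rw [xlen_H, C1], by rw [sht_H, C2]; simp, ?_, ?_, ?_⟩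
        · intro q hq
          cases q with
          | nil => simp
          | cons b q' =>
            rw [List.cons_prefix_cons] at hq
            obtain ⟨rfl, hq⟩ := hq
            have := C3 q' hq
            simp at this ⊢
            omega
        · intro q hq
          cases q with
          | nil => simp; omega
          | cons b q' =>
            rw [show (b :: q') ++ [SStep.H] = b :: (q' ++ [SStep.H]) from rfl,
              List.cons_prefix_cons] at hq
            obtain ⟨rfl, hq⟩ := hq
            have := C4 q' hq
            simp at this ⊢
            omega
        · intro e he
          rw [hdec] at he
          rcases List.mem_cons.1 he with rfl | he
          · exact ⟨show p + 1 = π a by rw [htop, hππ1], htop⟩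
          · exact C5 e he
      · -- U step
        have inv' : DecInv π m (p+1) (f+1) (p :: s) := by
          refine ⟨inv.stk.push, ?_, fun q hq => inv.isub q (by simp at hq ⊢; omega),
            ?_, ?_, ?_⟩
          · intro x hx
            rcases List.mem_cons.1 hx with rfl | hx
            · exact hpIcc
            · exact inv.ssub x hx
          · intro x hx
            rcases List.mem_cons.1 hx with rfl | hx
            · simp only [Finset.mem_Ico] at hπpIco ⊢
              omega
            · have h1 := inv.sclose x hx
              simp only [Finset.mem_Ico] at h1 ⊢
              have hxIcc := inv.ssub x hx
              have hx2 : π (π x) = x := (Hinv x hxIcc).2.1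
              have hne1 : π x ≠ p := by
                intro h; rw [h] at hx2
                have := (inv.stk.mem x hx).2
                omega
              omega
          · intro q hq
            simp only [Finset.mem_Ico] at hq
            have hq' : q ∈ Finset.Ico p (p+(f+2)) := by simp; omega
            rcases inv.iclose q hq' with h | h
            · exact Or.inl (List.mem_cons_of_mem _ h)
            · simp only [Finset.mem_Ico] at h
              by_cases h3 : π q = p
              · exact Or.inl (h3 ▸ List.mem_cons_self)
              · right; simp only [Finset.mem_Ico]; omega
          · intro x hx hxp
            rcases List.mem_cons.1 hx with rfl | hx
            · intro hcon; exact hH hcon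
            · have := (inv.stk.mem x hx).2
              omega
        obtain ⟨C1, C2, C3, C4, C5⟩ := IH (f+1) (by omega) (p+1) (p :: s) inv'
        have henc : enc π (f+2) p = .U :: enc π (f+1) (p+1) := by
          rw [enc, if_neg hD, if_neg hH]
        rw [henc]
        have hdec : dec (.U :: enc π (f+1) (p+1)) p s
            = dec (enc π (f+1) (p+1)) (p+1) (p :: s) := rfl
        refine ⟨by simp [C1], by rw [sht_U, C2]; push_cast [List.length_cons]; ring, ?_, ?_, ?_⟩
        · intro q hq
          cases q with
          | nil => simp
          | cons b q' =>
            rw [List.cons_prefix_cons] at hq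
            obtain ⟨rfl, hq⟩ := hq
            have := C3 q' hq
            simp at this ⊢
            omega
        · intro q hq
          cases q with
          | nil =>
            simp [List.cons_prefix_cons] at hq
          | cons b q' =>
            rw [show (b :: q') ++ [SStep.H] = b :: (q' ++ [SStep.H]) from rfl,
              List.cons_prefix_cons] at hq
            obtain ⟨rfl, hq⟩ := hq
            have := C4 q' hq
            simp at this ⊢
            omega
        · intro e he
          rw [hdec] at he
          exact C5 e he

end DecEnc

end NCMwork


namespace NCMwork

lemma mem_epts {E : List (ℕ × ℕ)} {x : ℕ} :
    x ∈ epts E ↔ ∃ e ∈ E, x = e.1 ∨ x = e.2 := by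
  simp [epts]

lemma pair_eq {a b c d : ℕ} (hab : a < b) (hcd : c < d)
    (h : ({a, b} : Finset ℕ) = {c, d}) : a = c ∧ b = d := by
  have h1 := Finset.ext_iff.1 h a
  have h2 := Finset.ext_iff.1 h b
  simp only [Finset.mem_insert, Finset.mem_singleton, true_or, true_iff,
    or_true, iff_true] at h1 h2
  rcases h1 with h1 | h1 <;> rcases h2 with h2 | h2 <;> omega

def toParts (E : List (ℕ × ℕ)) : Finset (Finset ℕ) :=
  (E.map (fun e => ({e.1, e.2} : Finset ℕ))).toFinset

lemma mem_toParts {E : List (ℕ × ℕ)} {B : Finset ℕ} :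
    B ∈ toParts E ↔ ∃ e ∈ E, ({e.1, e.2} : Finset ℕ) = B := by
  simp [toParts]

def toFP (m : ℕ) (E : List (ℕ × ℕ))
    (h1 : ∀ e ∈ E, e.1 < e.2)
    (h2 : (epts E).Nodup)
    (h3 : ∀ x, x ∈ epts E ↔ x ∈ Finset.Icc 1 m) : SP m where
  parts := toParts E
  supIndep := by
    rw [Finset.supIndep_iff_pairwiseDisjoint]
    intro B hB C hC hne
    simp only [Finset.mem_coe] at hB hC
    obtain ⟨e, he, rfl⟩ := mem_toParts.1 hB
    obtain ⟨f, hf, rfl⟩ := mem_toParts.1 hC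
    have hef : e ≠ f := by rintro rfl; exact hne rfl
    have hpw : E.Pairwise (Function.onFun List.Disjoint (fun e => [e.1, e.2])) :=
      (List.nodup_flatMap.1 h2).2
    have key : List.Disjoint [e.1, e.2] [f.1, f.2] :=
      by
        haveI : Std.Symm (Function.onFun List.Disjoint (fun e : ℕ × ℕ => [e.1, e.2])) :=
          ⟨fun x y h => by intro a ha hb; exact h hb ha⟩
        exact hpw.forall he hf hef
    refine Finset.disjoint_left.2 ?_
    intro x hx hx2
    exact key (by simpa using hx) (by simpa using hx2)
  sup_parts := by
    ext x
    rw [Finset.mem_sup]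
    constructor
    · rintro ⟨B, hB, hx⟩
      obtain ⟨e, he, rfl⟩ := mem_toParts.1 hB
      refine (h3 x).1 (mem_epts.2 ⟨e, he, ?_⟩)
      simpa using hx
    · intro hx
      obtain ⟨e, he, hxe⟩ := mem_epts.1 ((h3 x).2 hx)
      refine ⟨{e.1, e.2}, mem_toParts.2 ⟨e, he, rfl⟩, ?_⟩
      simp only [id_eq, Finset.mem_insert, Finset.mem_singleton]
      tauto
  bot_notMem := by
    intro h
    obtain ⟨e, he, hBe⟩ := mem_toParts.1 h
    have : e.1 ∈ (⊥ : Finset ℕ) := hBe ▸ (by simp)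
    simp at this

lemma parts_toFP {m : ℕ} {E : List (ℕ × ℕ)} {h1 h2 h3} :
    (toFP m E h1 h2 h3).parts = toParts E := rfl

lemma isMatching_toFP {m : ℕ} {E : List (ℕ × ℕ)} {h1 h2 h3} :
    IsMatching (toFP m E h1 h2 h3) := by
  intro B hB
  obtain ⟨e, he, rfl⟩ := mem_toParts.1 hB
  exact Finset.card_pair (h1 e he).ne

lemma isEdge_iff_of_matching {m : ℕ} {P : SP m} (hM : IsMatching P) {i j : ℕ} :
    IsEdge P i j ↔ i < j ∧ ({i, j} : Finset ℕ) ∈ P.parts := by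
  constructor
  · rintro (⟨rfl, h⟩ | ⟨hij, B, hB, hi, hj, _⟩)
    · have := hM _ h; simp at this
    · refine ⟨hij, ?_⟩
      have hcard := hM B hB
      have hsub : ({i, j} : Finset ℕ) ⊆ B := by
        intro x hx
        simp only [Finset.mem_insert, Finset.mem_singleton] at hx
        rcases hx with rfl | rfl <;> assumption
      have hpair : ({i, j} : Finset ℕ).card = 2 := Finset.card_pair hij.ne
      have := Finset.eq_of_subset_of_card_le hsub (by omega)
      exact this ▸ hB
  · rintro ⟨hij, hB⟩
    right
    refine ⟨hij, {i, j}, hB, by simp, by simp, ?_⟩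
    intro x hx
    simp only [Finset.mem_insert, Finset.mem_singleton] at hx
    rcases hx with rfl | rfl <;> omega

lemma isEdge_toFP {m : ℕ} {E : List (ℕ × ℕ)} {h1 h2 h3} {i j : ℕ} :
    IsEdge (toFP m E h1 h2 h3) i j ↔ (i, j) ∈ E := by
  rw [isEdge_iff_of_matching isMatching_toFP, parts_toFP]
  constructor
  · rintro ⟨hij, hB⟩
    obtain ⟨e, he, hBe⟩ := mem_toParts.1 hB
    obtain ⟨hh1, hh2⟩ := pair_eq (h1 e he) hij hBe
    have : e = (i, j) := Prod.ext hh1 hh2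
    exact this ▸ he
  · intro hE
    exact ⟨h1 (i, j) hE, mem_toParts.2 ⟨(i, j), hE, rfl⟩⟩

lemma edge_bound {m : ℕ} {P : SP m} {i j : ℕ} (h : IsEdge P i j) :
    i ∈ Finset.Icc 1 m ∧ j ∈ Finset.Icc 1 m := by
  rcases h with ⟨rfl, h⟩ | ⟨_, B, hB, hi, hj, _⟩
  · have : i ∈ Finset.Icc 1 m := P.le h (by simp)
    exact ⟨this, this⟩
  · exact ⟨P.le hB hi, P.le hB hj⟩

lemma dcr_zero_iff {m : ℕ} {P : SP m} :
    dcr 2 P = 0 ↔ ∀ e₁ e₂ : ℕ × ℕ, IsEdge P e₁.1 e₁.2 → IsEdge P e₂.1 e₂.2 →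
      ¬ CrossPair 2 e₁ e₂ := by
  have hfin : {p : (ℕ × ℕ) × ℕ × ℕ |
      IsEdge P p.1.1 p.1.2 ∧ IsEdge P p.2.1 p.2.2 ∧ CrossPair 2 p.1 p.2}.Finite := by
    apply Set.Finite.subset (Set.Finite.prod
      (Set.Finite.prod (Finset.Icc 1 m).finite_toSet (Finset.Icc 1 m).finite_toSet)
      (Set.Finite.prod (Finset.Icc 1 m).finite_toSet (Finset.Icc 1 m).finite_toSet))
    rintro ⟨⟨a, b⟩, c, d⟩ ⟨he1, he2, _⟩
    obtain ⟨hb1, hb2⟩ := edge_bound he1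
    obtain ⟨hb3, hb4⟩ := edge_bound he2
    exact ⟨⟨hb1, hb2⟩, hb3, hb4⟩
  constructor
  · intro h e₁ e₂ h1 h2 hc
    have hz := (Set.ncard_eq_zero hfin).1 h
    have : (e₁, e₂) ∈ {p : (ℕ × ℕ) × ℕ × ℕ |
        IsEdge P p.1.1 p.1.2 ∧ IsEdge P p.2.1 p.2.2 ∧ CrossPair 2 p.1 p.2} := ⟨h1, h2, hc⟩
    rw [hz] at this
    exact this
  · intro h
    have : {p : (ℕ × ℕ) × ℕ × ℕ |
        IsEdge P p.1.1 p.1.2 ∧ IsEdge P p.2.1 p.2.2 ∧ CrossPair 2 p.1 p.2} = ∅ := by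
      ext ⟨e₁, e₂⟩
      simp only [Set.mem_setOf_eq, Set.mem_empty_iff_false, iff_false, not_and]
      intro h1 h2
      exact h e₁ e₂ h1 h2
    rw [dcr, this, Set.ncard_empty]

/-- The partner function of a matching. -/
def ptn {m : ℕ} (P : SP m) (x : ℕ) : ℕ := ∑ y ∈ (P.part x).erase x, y

lemma ptn_block {m : ℕ} {P : SP m} {a b : ℕ} (hab : a ≠ b)
    (hB : ({a, b} : Finset ℕ) ∈ P.parts) : ptn P a = b := by
  have haB : a ∈ ({a, b} : Finset ℕ) := by simp
  have hpart : P.part a = {a, b} := P.part_eq_of_mem hB haB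
  rw [ptn, hpart, Finset.erase_insert (by simpa using hab)]
  simp

lemma ptn_spec {m : ℕ} {P : SP m} (hM : IsMatching P) {x : ℕ}
    (hx : x ∈ Finset.Icc 1 m) :
    P.part x = {x, ptn P x} ∧ ptn P x ≠ x := by
  have hBp := P.part_mem.2 hx
  have hxB := P.mem_part hx
  have hcard := hM _ hBp
  have h1 : ((P.part x).erase x).card = 1 := by
    rw [Finset.card_erase_of_mem hxB, hcard]
  obtain ⟨y, hy⟩ := Finset.card_eq_one.1 h1
  have hptn : ptn P x = y := by rw [ptn, hy]; simp
  have hyx : y ≠ x := by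
    have : y ∈ (P.part x).erase x := hy ▸ Finset.mem_singleton_self y
    exact (Finset.mem_erase.1 this).1
  constructor
  · rw [hptn]
    have hie := Finset.insert_erase hxB
    rw [hy] at hie
    rw [← hie]
  · rw [hptn]; exact hyx

lemma ptn_props {m : ℕ} {P : SP m} (hM : IsMatching P) {x : ℕ}
    (hx : x ∈ Finset.Icc 1 m) :
    ptn P x ∈ Finset.Icc 1 m ∧ ptn P (ptn P x) = x ∧ ptn P x ≠ x ∧
      ({x, ptn P x} : Finset ℕ) ∈ P.parts := by
  obtain ⟨hpart, hne⟩ := ptn_spec hM hx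
  have hBp : ({x, ptn P x} : Finset ℕ) ∈ P.parts := hpart ▸ P.part_mem.2 hx
  have hyB : ptn P x ∈ ({x, ptn P x} : Finset ℕ) := by simp
  have hyIcc : ptn P x ∈ Finset.Icc 1 m := P.le hBp hyB
  have hinv : ptn P (ptn P x) = x := by
    have : ({ptn P x, x} : Finset ℕ) ∈ P.parts := by
      rwa [Finset.pair_comm]
    exact ptn_block hne this
  exact ⟨hyIcc, hinv, hne, hBp⟩

end NCMwork

namespace NCMwork

lemma lsp_valid {n : ℕ} {l : List SStep} (hl : IsLittleSchroederPath n l) :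
    Valid l ([] : List ℕ).length := by
  obtain ⟨h1, h2, h3, h4⟩ := hl
  exact ⟨fun q hq => by simpa using h3 q hq, fun q hq => by simpa using h4 q hq,
    by simpa using h2⟩

lemma stk_one : Stk 1 [] := ⟨List.Pairwise.nil, by simp, le_rfl⟩

lemma path_lt {n : ℕ} {l : List SStep} (hl : IsLittleSchroederPath n l) :
    ∀ e ∈ dec l 1 [], e.1 < e.2 :=
  fun e he => ((dec_spec l 1 [] stk_one (lsp_valid hl)).1 e he).1

lemma path_nodup {n : ℕ} {l : List SStep} (hl : IsLittleSchroederPath n l) :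
    (epts (dec l 1 [])).Nodup := by
  have spec := dec_spec l 1 [] stk_one (lsp_valid hl)
  refine spec.2.1.nodup_iff.2 ?_
  simpa using List.nodup_range' (s := 1) (n := xlen l)

lemma path_mem {n : ℕ} {l : List SStep} (hl : IsLittleSchroederPath n l) :
    ∀ x, x ∈ epts (dec l 1 []) ↔ x ∈ Finset.Icc 1 (2*n) := by
  intro x
  have spec := dec_spec l 1 [] stk_one (lsp_valid hl)
  rw [spec.2.1.mem_iff]
  simp only [List.nil_append, List.mem_range'_1, Finset.mem_Icc, hl.1]
  omega

/-- The matching associated to a little Schröder path. -/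
noncomputable def pathFP (n : ℕ) (l : List SStep)
    (hl : IsLittleSchroederPath n l) : SP (2*n) :=
  toFP (2*n) (dec l 1 []) (path_lt hl) (path_nodup hl) (path_mem hl)

lemma pathFP_matching {n : ℕ} {l : List SStep} (hl : IsLittleSchroederPath n l) :
    IsMatching (pathFP n l hl) := isMatching_toFP

lemma pathFP_dcr {n : ℕ} {l : List SStep} (hl : IsLittleSchroederPath n l) :
    dcr 2 (pathFP n l hl) = 0 := by
  refine dcr_zero_iff.2 ?_
  intro e₁ e₂ h1 h2 hc
  rw [pathFP, isEdge_toFP] at h1 h2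
  rw [Prod.mk.eta] at h1 h2
  exact (dec_spec l 1 [] stk_one (lsp_valid hl)).2.2 e₁ h1 e₂ h2 hc

lemma pathFP_ptn {n : ℕ} {l : List SStep} (hl : IsLittleSchroederPath n l) :
    ∀ e ∈ dec l 1 [], ptn (pathFP n l hl) e.1 = e.2 ∧ ptn (pathFP n l hl) e.2 = e.1 := by
  intro e he
  have h1 : e.1 < e.2 := path_lt hl e he
  have hB : ({e.1, e.2} : Finset ℕ) ∈ (pathFP n l hl).parts :=
    mem_toParts.2 ⟨e, he, rfl⟩
  exact ⟨ptn_block h1.ne hB, ptn_block h1.ne' ((Finset.pair_comm e.1 e.2) ▸ hB)⟩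

lemma pathFP_inj {n : ℕ} {l l' : List SStep} (hl : IsLittleSchroederPath n l)
    (hl' : IsLittleSchroederPath n l') (h : pathFP n l hl = pathFP n l' hl') :
    l = l' := by
  have e1 : enc (ptn (pathFP n l hl)) (xlen l) 1 = l :=
    enc_dec _ l 1 [] stk_one (lsp_valid hl) (pathFP_ptn hl)
  have e2 : enc (ptn (pathFP n l hl)) (xlen l') 1 = l' := by
    rw [h]
    exact enc_dec _ l' 1 [] stk_one (lsp_valid hl') (pathFP_ptn hl')
  rw [← e1, ← e2, hl.1, hl'.1]

lemma pathFP_surj {n : ℕ} (P : SP (2*n)) (hM : IsMatching P) (hd : dcr 2 P = 0) :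
    ∃ (l : List SStep) (hl : IsLittleSchroederPath n l), pathFP n l hl = P := by
  set π := ptn P with hπ
  have Hinv : ∀ x ∈ Finset.Icc 1 (2*n),
      π x ∈ Finset.Icc 1 (2*n) ∧ π (π x) = x ∧ π x ≠ x := by
    intro x hx
    obtain ⟨a, b, c, _⟩ := ptn_props hM hx
    exact ⟨a, b, c⟩
  have Hc : ∀ x y, x ∈ Finset.Icc 1 (2*n) → y ∈ Finset.Icc 1 (2*n) → x < y →
      y ≤ π x → π x < π y → y + 2 ≤ π x → False := by
    intro x y hx hy h1 h2 h3 h4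
    have hx4 := (ptn_props hM hx).2.2.2
    have hy4 := (ptn_props hM hy).2.2.2
    have he1 : IsEdge P x (π x) :=
      (isEdge_iff_of_matching hM).2 ⟨by omega, hx4⟩
    have he2 : IsEdge P y (π y) :=
      (isEdge_iff_of_matching hM).2 ⟨by omega, hy4⟩
    exact dcr_zero_iff.1 hd (x, π x) (y, π y) he1 he2 ⟨h1, h2, h3, by omega⟩
  have inv : DecInv π (2*n) 1 (2*n) [] := by
    refine ⟨stk_one, by simp, ?_, by simp, ?_, by simp⟩
    · intro q hq
      rw [Finset.mem_Ico] at hq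
      rw [Finset.mem_Icc]
      omega
    · intro q hq
      right
      rw [Finset.mem_Ico] at hq
      have := (Hinv q (by rw [Finset.mem_Icc]; omega)).1
      rw [Finset.mem_Icc] at this
      rw [Finset.mem_Ico]
      omega
  obtain ⟨C1, C2, C3, C4, C5⟩ := dec_enc Hinv Hc (2*n) 1 [] inv
  simp only [hπ] at C5
  refine ⟨enc π (2*n) 1, ⟨C1, by simpa using C2, fun q hq => by simpa using C3 q hq,
    fun q hq => by simpa using C4 q hq⟩, ?_⟩
  set hlsp : IsLittleSchroederPath n (enc π (2*n) 1) :=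
    ⟨C1, by simpa using C2, fun q hq => by simpa using C3 q hq,
      fun q hq => by simpa using C4 q hq⟩
  apply Finpartition.ext
  show toParts (dec (enc π (2*n) 1) 1 []) = P.parts
  ext B
  constructor
  · intro hB
    obtain ⟨e, he, rfl⟩ := mem_toParts.1 hB
    have he1 : e.1 ∈ Finset.Icc 1 (2*n) :=
      (path_mem hlsp e.1).1 (mem_epts.2 ⟨e, he, Or.inl rfl⟩)
    rw [(C5 e he).1]
    exact (ptn_props hM he1).2.2.2
  · intro hB
    have hcard := hM B hB
    have hBne : B.Nonempty := by
      rw [← Finset.card_pos, hcard]; omega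
    obtain ⟨x, hxB⟩ := hBne
    have hxI : x ∈ Finset.Icc 1 (2*n) := P.le hB hxB
    obtain ⟨e, he, hxe⟩ := mem_epts.1 ((path_mem hlsp x).2 hxI)
    have hBpart : B = P.part x := (P.part_eq_of_mem hB hxB).symm
    have hpx := (ptn_spec hM hxI).1
    rcases hxe with rfl | rfl
    · rw [hBpart, hpx, ← (C5 e he).1]
      exact mem_toParts.2 ⟨e, he, rfl⟩
    · rw [hBpart, hpx, ← (C5 e he).2, Finset.pair_comm]
      exact mem_toParts.2 ⟨e, he, rfl⟩

end NCMwork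

/-- The number of 2-distant noncrossing complete matchings of `[2n]` is the
`n`-th little Schröder number. -/
theorem ncm_two_eq_littleSchroeder (n : ℕ) :
    NCM 2 (2 * n) = littleSchroeder n := by
  rw [NCM, littleSchroeder, ← Nat.card_coe_set_eq, ← Nat.card_coe_set_eq]
  refine (Nat.card_eq_of_bijective
    (fun l : {l : List SStep | IsLittleSchroederPath n l} =>
      (⟨NCMwork.pathFP n l.1 l.2,
        NCMwork.pathFP_matching l.2, NCMwork.pathFP_dcr l.2⟩ :
        {P : SP (2*n) | IsMatching P ∧ dcr 2 P = 0})) ⟨?_, ?_⟩).symm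
  · rintro ⟨l, hl⟩ ⟨l', hl'⟩ h
    simp only [Subtype.mk.injEq] at h
    exact Subtype.ext (NCMwork.pathFP_inj hl hl' h)
  · rintro ⟨P, hM, hd⟩
    obtain ⟨l, hl, hPl⟩ := NCMwork.pathFP_surj P hM hd
    exact ⟨⟨l, hl⟩, Subtype.ext hPl⟩
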